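/- arXiv:1804.05421 — 3 statements merged into one kernel-verified Lean document; each statement's English description precedes it below -/
import Mathlib

section
/- For any unit quaternion p ∈ S³, the map h ↦ -conj(h p⁻¹) · p is the Euclidean reflection of ℍ ≅ ℝ⁴ about the hyperplane through 0 orthogonal to p; in particular h ↦ -conj(h) is the reflection about the hyperplane E³ of purely imaginary quaternions. -/
/-- For any unit quaternion `p`, the map `h ↦ -conj (h p⁻¹) p` is the Euclidean
reflection of `ℍ ≅ ℝ⁴` about the hyperplane through `0` orthogonal to `p`,
i.e. `x ↦ x - 2⟨x, p⟩ p`; in particular `h ↦ -conj h` is the reflection about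
the hyperplane of purely imaginary quaternions (the hyperplane orthogonal to
`1`). -/
theorem quaternion_reflection (p : Quaternion ℝ) (hp : ‖p‖ = 1) :
    (∀ h : Quaternion ℝ,
      -star (h * p⁻¹) * p = h - (2 * (inner ℝ h p : ℝ)) • p) ∧
    (∀ h : Quaternion ℝ,
      -star h = h - (2 * (inner ℝ h (1 : Quaternion ℝ) : ℝ)) • (1 : Quaternion ℝ)) := by
  have hp0 : p ≠ 0 := by intro h; simp [h] at hp
  constructor
  · intro h
    set q := h * p⁻¹ with hq
    have hh : h = q * p := by
      rw [hq, mul_assoc, inv_mul_cancel₀ hp0, mul_one]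
    have hnsq : Quaternion.normSq p = 1 := by
      rw [Quaternion.normSq_eq_norm_mul_self, hp, mul_one]
    have hip : star p = p⁻¹ := by
      apply eq_inv_of_mul_eq_one_left
      rw [Quaternion.star_mul_self, hnsq, Quaternion.coe_one]
    have hinner : (inner ℝ h p : ℝ) = q.re := by
      rw [Quaternion.inner_def, hh, mul_assoc, hip, mul_inv_cancel₀ hp0, mul_one]
    rw [hinner, hh]
    have : (2 * q.re) • (p : Quaternion ℝ) = ((2 * q.re : ℝ) : Quaternion ℝ) * p := by
      rw [Quaternion.coe_mul_eq_smul]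
    rw [this, ← Quaternion.self_add_star' q]
    noncomm_ring
  · intro h
    have hinner : (inner ℝ h (1 : Quaternion ℝ) : ℝ) = h.re := by
      simp [Quaternion.inner_def]
    rw [hinner]
    have : (2 * h.re) • (1 : Quaternion ℝ) = ((2 * h.re : ℝ) : Quaternion ℝ) := by
      rw [← Quaternion.coe_mul_eq_smul, mul_one]
    rw [this, ← Quaternion.self_add_star' h]
    noncomm_ring
end

section
/- For any unit quaternion of the form z₁ + z₂ j ∈ S³ (z₁, z₂ ∈ ℂ ⊂ ℍ), one has (z₁+z₂j)⁻¹ · i · (z₁+z₂j) ∈ S², and the fiber of the map 𝒫: S³ → S², r ↦ r⁻¹ i r, through a point r equals {e^{iθ} r : θ ∈ ℝ}. -/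
/-- The imaginary unit `i` of the quaternions. -/
def qI : Quaternion ℝ := ⟨0, 1, 0, 0⟩

/-- `e^{iθ} = cos θ + i sin θ` viewed as a unit quaternion. -/
noncomputable def expI (θ : ℝ) : Quaternion ℝ := ⟨Real.cos θ, Real.sin θ, 0, 0⟩

@[simp] lemma qI_re : qI.re = 0 := rfl
@[simp] lemma qI_imI : qI.imI = 1 := rfl
@[simp] lemma qI_imJ : qI.imJ = 0 := rfl
@[simp] lemma qI_imK : qI.imK = 0 := rfl
@[simp] lemma expI_re (θ : ℝ) : (expI θ).re = Real.cos θ := rfl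
@[simp] lemma expI_imI (θ : ℝ) : (expI θ).imI = Real.sin θ := rfl
@[simp] lemma expI_imJ (θ : ℝ) : (expI θ).imJ = 0 := rfl
@[simp] lemma expI_imK (θ : ℝ) : (expI θ).imK = 0 := rfl

lemma inv_eq_star' (r : Quaternion ℝ) (hr : ‖r‖ = 1) : r⁻¹ = star r := by
  apply inv_eq_of_mul_eq_one_right
  rw [Quaternion.self_mul_star, Quaternion.normSq_eq_norm_mul_self, hr]
  norm_num

lemma mul_star_self_one (r : Quaternion ℝ) (hr : ‖r‖ = 1) : r * star r = 1 := by
  rw [Quaternion.self_mul_star, Quaternion.normSq_eq_norm_mul_self, hr]; norm_num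

lemma star_mul_self_one (r : Quaternion ℝ) (hr : ‖r‖ = 1) : star r * r = 1 := by
  rw [Quaternion.star_mul_self, Quaternion.normSq_eq_norm_mul_self, hr]; norm_num

/-- For any unit quaternion `r ∈ S³`, the Hopf image `𝒫(r) = r⁻¹ i r` lies in
`S²` (it is a purely imaginary unit quaternion), and the fiber of
`𝒫 : S³ → S²`, `r ↦ r⁻¹ i r`, through `r` is exactly `{e^{iθ} r : θ ∈ ℝ}`. -/
theorem hopf_image_and_fiber (r : Quaternion ℝ) (hr : ‖r‖ = 1) :
    ((r⁻¹ * qI * r).re = 0 ∧ ‖r⁻¹ * qI * r‖ = 1) ∧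
    ∀ r' : Quaternion ℝ, ‖r'‖ = 1 →
      (r'⁻¹ * qI * r' = r⁻¹ * qI * r ↔ ∃ θ : ℝ, r' = expI θ * r) := by
  have hqI : ‖qI‖ = 1 := by
    rw [norm_eq_sqrt_real_inner, Quaternion.inner_self]
    simp [Quaternion.normSq_def']
  have hrs := inv_eq_star' r hr
  constructor
  · constructor
    · rw [hrs]
      have hn : Quaternion.normSq r = 1 := by
        rw [Quaternion.normSq_eq_norm_mul_self, hr]; norm_num
      have hn' : r.re^2 + r.imI^2 + r.imJ^2 + r.imK^2 = 1 := by
        have := hn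
        rw [Quaternion.normSq_def'] at this
        linarith [this]
      simp [Quaternion.re_mul]
      ring_nf
    · rw [norm_mul, norm_mul, norm_inv, hr, hqI]; norm_num
  · intro r' hr'
    have hrs' := inv_eq_star' r' hr'
    constructor
    · intro h
      rw [hrs, hrs'] at h
      -- derive qI * q = q * qI for q = r' * star r
      set q : Quaternion ℝ := r' * star r with hq
      have hcomm : qI * q = q * qI := by
        have h1 : r' * (star r' * qI * r') * star r = r' * (star r * qI * r) * star r := by
          rw [h]
        calc qI * q = r' * (star r' * qI * r') * star r := by
              rw [show r' * (star r' * qI * r') * star r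
                  = (r' * star r') * qI * (r' * star r) by simp [mul_assoc],
                mul_star_self_one r' hr', one_mul]
          _ = r' * (star r * qI * r) * star r := h1
          _ = q * qI := by
              rw [show r' * (star r * qI * r) * star r
                  = (r' * star r) * qI * (r * star r) by simp [mul_assoc],
                mul_star_self_one r hr, mul_one]
      have hnq : ‖q‖ = 1 := by
        rw [hq, norm_mul, norm_star, hr, hr']; norm_num
      have hK : q.imK = 0 := by
        have := congrArg QuaternionAlgebra.imJ hcomm
        simp [Quaternion.imJ_mul] at this
        linarith
      have hJ : q.imJ = 0 := by
        have := congrArg QuaternionAlgebra.imK hcomm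
        simp [Quaternion.imK_mul] at this
        linarith
      have hab : q.re^2 + q.imI^2 = 1 := by
        have hn : Quaternion.normSq q = 1 := by
          rw [Quaternion.normSq_eq_norm_mul_self, hnq]; norm_num
        rw [Quaternion.normSq_def'] at hn
        nlinarith [hn, hJ, hK]
      set z : ℂ := ⟨q.re, q.imI⟩ with hz
      have habs : ‖z‖ = 1 := by
        simp [Complex.norm_def, Complex.normSq, hz]
        rw [show q.re * q.re + q.imI * q.imI = q.re^2 + q.imI^2 by ring, hab]
        try exact Real.sqrt_one
      have hz0 : z ≠ 0 := by
        intro h0; rw [h0] at habs; simp at habs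
      refine ⟨z.arg, ?_⟩
      have hcos : Real.cos z.arg = q.re := by
        rw [Complex.cos_arg hz0, habs]; simp [hz]
      have hsin : Real.sin z.arg = q.imI := by
        rw [Complex.sin_arg, habs]; simp [hz]
      have hqe : expI z.arg = q := by
        ext <;> simp [hcos, hsin, hJ, hK]
      rw [hqe, hq, mul_assoc, star_mul_self_one r hr, mul_one]
    · rintro ⟨θ, rfl⟩
      rw [hrs, hrs']
      have hstar : star (expI θ * r) = star r * star (expI θ) := by
        rw [star_mul]
      rw [hstar]
      have key : star (expI θ) * qI * expI θ = qI := by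
        ext <;>
          simp [Quaternion.re_mul, Quaternion.imI_mul, Quaternion.imJ_mul,
            Quaternion.imK_mul, Quaternion.re_star, Quaternion.imI_star,
            Quaternion.imJ_star, Quaternion.imK_star] <;>
          nlinarith [Real.sin_sq_add_cos_sq θ]
      calc star r * star (expI θ) * qI * (expI θ * r)
          = star r * (star (expI θ) * qI * expI θ) * r := by simp [mul_assoc]
        _ = star r * qI * r := by rw [key]
end

section
/- If the isometry h ↦ p⁻¹ h q of S³ (p, q unit quaternions) maps every Hopf fiber {e^{iθ} r : θ ∈ ℝ} onto a Hopf fiber, then p = e^{iτ} or p = e^{iτ} j for some τ ∈ ℝ. -/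
/-- The imaginary unit `j` of the quaternions. -/
def qJ : Quaternion ℝ := ⟨0, 0, 1, 0⟩

lemma expI_mul (a b : ℝ) : expI a * expI b = expI (a + b) := by
  ext <;> simp only [Quaternion.re_mul, Quaternion.imI_mul, Quaternion.imJ_mul,
    Quaternion.imK_mul] <;> simp [expI, Real.cos_add, Real.sin_add] <;> ring

lemma expI_zero : expI 0 = 1 := by
  ext <;> simp [expI, Quaternion.re_one, Quaternion.imI_one, Quaternion.imJ_one, Quaternion.imK_one]

lemma exists_cos_sin {a b : ℝ} (h : a ^ 2 + b ^ 2 = 1) :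
    ∃ τ : ℝ, Real.cos τ = a ∧ Real.sin τ = b := by
  set z : ℂ := ⟨a, b⟩ with hz
  have habs : ‖z‖ = 1 := by
    have h1 : (‖z‖) ^ 2 = 1 := by
      rw [Complex.sq_norm, Complex.normSq_mk]; nlinarith
    have h2 := norm_nonneg z
    nlinarith
  have hz0 : z ≠ 0 := by
    intro h; rw [h, norm_zero] at habs; norm_num at habs
  refine ⟨Complex.arg z, ?_, ?_⟩
  · rw [Complex.cos_arg hz0, habs, div_one]
  · rw [Complex.sin_arg, habs, div_one]

/-- If the isometry `h ↦ p⁻¹ h q` of `S³` (`p, q` unit quaternions) maps every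
Hopf fiber `{e^{iθ} r : θ ∈ ℝ}` onto a Hopf fiber, then `p = e^{iτ}` or
`p = e^{iτ} j` for some `τ ∈ ℝ`. -/
theorem hopf_fibration_preserving (p q : Quaternion ℝ)
    (hp : ‖p‖ = 1) (hq : ‖q‖ = 1)
    (hfib : ∀ r : Quaternion ℝ, ‖r‖ = 1 → ∃ r' : Quaternion ℝ, ‖r'‖ = 1 ∧
      {h : Quaternion ℝ | ∃ θ : ℝ, h = p⁻¹ * (expI θ * r) * q} =
        {h : Quaternion ℝ | ∃ θ : ℝ, h = expI θ * r'}) :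
    ∃ τ : ℝ, p = expI τ ∨ p = expI τ * qJ := by
  obtain ⟨r', hr', hset⟩ := hfib 1 norm_one
  have hr0 : r' ≠ 0 := by intro h; rw [h, norm_zero] at hr'; norm_num at hr'
  have hmem : ∀ θ : ℝ, ∃ φ : ℝ, p⁻¹ * (expI θ * 1) * q = expI φ * r' := by
    intro θ
    have : p⁻¹ * (expI θ * 1) * q ∈
        {h : Quaternion ℝ | ∃ θ' : ℝ, h = p⁻¹ * (expI θ' * 1) * q} := ⟨θ, rfl⟩
    rw [hset] at this
    exact this
  obtain ⟨θ₀, h0⟩ := hmem 0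
  obtain ⟨θ₁, h1⟩ := hmem (Real.pi / 2)
  rw [expI_zero, one_mul, mul_one] at h0
  rw [mul_one] at h1
  have hp0 : p ≠ 0 := by intro h; rw [h, norm_zero] at hp; norm_num at hp
  have hq' : q = p * (expI θ₀ * r') := by
    calc q = p * (p⁻¹ * q) := by rw [← mul_assoc, mul_inv_cancel₀ hp0, one_mul]
    _ = p * (expI θ₀ * r') := by rw [h0]
  have h1' : expI (Real.pi / 2) * q = p * (expI θ₁ * r') := by
    calc expI (Real.pi / 2) * q = p * (p⁻¹ * expI (Real.pi / 2) * q) := by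
          rw [← mul_assoc, ← mul_assoc, mul_inv_cancel₀ hp0, one_mul]
    _ = p * (expI θ₁ * r') := by rw [h1]
  have h2 : expI (Real.pi / 2) * p * expI θ₀ = p * expI θ₁ := by
    apply mul_right_cancel₀ hr0
    calc expI (Real.pi / 2) * p * expI θ₀ * r'
        = expI (Real.pi / 2) * (p * (expI θ₀ * r')) := by noncomm_ring
      _ = p * (expI θ₁ * r') := by rw [← hq', h1']
      _ = p * expI θ₁ * r' := by rw [mul_assoc]
  have key : expI (Real.pi / 2) * p * expI (θ₀ - θ₁) = p := by
    calc expI (Real.pi / 2) * p * expI (θ₀ - θ₁)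
        = expI (Real.pi / 2) * p * expI θ₀ * expI (-θ₁) := by
          rw [mul_assoc (expI (Real.pi / 2) * p), expI_mul, ← sub_eq_add_neg]
      _ = p * expI θ₁ * expI (-θ₁) := by rw [h2]
      _ = p := by rw [mul_assoc, expI_mul, add_neg_cancel, expI_zero, mul_one]
  have hnorm : p.re ^ 2 + p.imI ^ 2 + p.imJ ^ 2 + p.imK ^ 2 = 1 := by
    have := Quaternion.normSq_eq_norm_mul_self p
    rw [hp, Quaternion.normSq_def'] at this
    linarith
  have e1 := congrArg QuaternionAlgebra.re key
  have e2 := congrArg QuaternionAlgebra.imI key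
  have e3 := congrArg QuaternionAlgebra.imJ key
  have e4 := congrArg QuaternionAlgebra.imK key
  simp only [Quaternion.re_mul, Quaternion.imI_mul, Quaternion.imJ_mul, Quaternion.imK_mul] at e1 e2 e3 e4
  simp only [expI, Real.cos_pi_div_two, Real.sin_pi_div_two] at e1 e2 e3 e4
  ring_nf at e1 e2 e3 e4
  have hCS : Real.cos (θ₀ - θ₁) ^ 2 + Real.sin (θ₀ - θ₁) ^ 2 = 1 := by
    have := Real.sin_sq_add_cos_sq (θ₀ - θ₁); linarith
  have hC : Real.cos (θ₀ - θ₁) = 0 := by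
    linear_combination (-p.imI) * e1 + p.re * e2 + (-p.imK) * e3 + p.imJ * e4 -
      Real.cos (θ₀ - θ₁) * hnorm
  have hS : (Real.sin (θ₀ - θ₁) - 1) * (Real.sin (θ₀ - θ₁) + 1) = 0 := by nlinarith
  rcases mul_eq_zero.mp hS with h | h
  · -- S = 1 : p = c j + d k
    have hS1 : Real.sin (θ₀ - θ₁) = 1 := by linarith
    rw [hC, hS1] at e1 e2
    have ha : p.re = 0 := by linarith
    have hb : p.imI = 0 := by linarith
    obtain ⟨τ, hcos, hsin⟩ := exists_cos_sin (a := p.imJ) (b := p.imK)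
      (by rw [ha, hb] at hnorm; linarith [hnorm])
    refine ⟨τ, Or.inr ?_⟩
    ext <;> simp only [Quaternion.re_mul, Quaternion.imI_mul, Quaternion.imJ_mul,
      Quaternion.imK_mul] <;> simp [expI, qJ, hcos, hsin, ha, hb]
  · -- S = -1 : p = a + b i
    have hS1 : Real.sin (θ₀ - θ₁) = -1 := by linarith
    rw [hC, hS1] at e3 e4
    have hc : p.imJ = 0 := by linarith
    have hd : p.imK = 0 := by linarith
    obtain ⟨τ, hcos, hsin⟩ := exists_cos_sin (a := p.re) (b := p.imI)
      (by rw [hc, hd] at hnorm; linarith [hnorm])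
    refine ⟨τ, Or.inl ?_⟩
    ext <;> simp [expI, hcos, hsin, hc, hd]
end
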